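/- Let A be a nontrivial semiprime superalgebra with superinvolution * over a commutative unital ring φ with 1/2 ∈ φ, and let U be a Lie ideal of K such that [u∘v, w] = 0 for all homogeneous u, v, w ∈ U. Then u∘v ∈ Z for every u, v ∈ U₀, where U₀ = U ∩ A₀. -/

import Mathlib

open DirectSum

/-- The sign `(−1)^{ij}` for degrees `i j : ZMod 2`. -/
def ssign (i j : ZMod 2) : ℤ := if i = 1 ∧ j = 1 then -1 else 1

variable {φ A : Type*}

section
variable [CommRing φ] [Ring A] [Algebra φ A]

/-- Superbracket `[x,y] = xy − (−1)^{ij} yx` of homogeneous elements of degrees `i`, `j`. -/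
def sbr (i j : ZMod 2) (x y : A) : A := x * y - ssign i j • (y * x)

/-- Supercircle product `x∘y = xy + (−1)^{ij} yx` of homogeneous elements of degrees `i`, `j`. -/
def scirc (i j : ZMod 2) (x y : A) : A := x * y + ssign i j • (y * x)

/-- A graded two-sided ideal of the superalgebra `A = ⨁ 𝒜 i`. -/
structure SuperIdeal (𝒜 : ZMod 2 → Submodule φ A) [GradedAlgebra 𝒜] where
  carrier : Submodule φ A
  mul_mem_left : ∀ (a x : A), x ∈ carrier → a * x ∈ carrier
  mul_mem_right : ∀ (a x : A), x ∈ carrier → x * a ∈ carrier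
  graded' : ∀ (i : ZMod 2), ∀ x ∈ carrier, ((DirectSum.decompose 𝒜 x) i : A) ∈ carrier

variable (𝒜 : ZMod 2 → Submodule φ A)

/-- A superalgebra is prime if `I⬝J = 0` forces `I = 0` or `J = 0` for graded ideals `I`, `J`. -/
def SuperPrime [GradedAlgebra 𝒜] : Prop :=
  ∀ I J : SuperIdeal 𝒜, (∀ x ∈ I.carrier, ∀ y ∈ J.carrier, x * y = 0) →
    I.carrier = ⊥ ∨ J.carrier = ⊥

/-- A superalgebra is semiprime if it has no nonzero graded ideal of square zero. -/
def SuperSemiprime [GradedAlgebra 𝒜] : Prop :=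
  ∀ I : SuperIdeal 𝒜, (∀ x ∈ I.carrier, ∀ y ∈ I.carrier, x * y = 0) → I.carrier = ⊥

/-- `Z`, the even part of the center of `A`. -/
def evenCenter : Set A := {z : A | z ∈ 𝒜 0 ∧ ∀ x : A, z * x = x * z}

/-- A subset `M` of `A` is dense if the (non-unital) subalgebra of `A` generated by `M`
contains a nonzero ideal of `A`. -/
def IsDenseIn [GradedAlgebra 𝒜] (M : Set A) : Prop :=
  ∃ J : SuperIdeal 𝒜, J.carrier ≠ ⊥ ∧
    (J.carrier : Set A) ⊆ NonUnitalAlgebra.adjoin φ M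

/-- A superinvolution on the superalgebra `A`. -/
structure Superinvolution (𝒜 : ZMod 2 → Submodule φ A) where
  toFun : A →ₗ[φ] A
  grading : ∀ (i : ZMod 2), ∀ x ∈ 𝒜 i, toFun x ∈ 𝒜 i
  invol : ∀ x : A, toFun (toFun x) = x
  mul_rev : ∀ (i j : ZMod 2), ∀ x ∈ 𝒜 i, ∀ y ∈ 𝒜 j,
    toFun (x * y) = ssign i j • (toFun y * toFun x)

/-- A Lie ideal of the Lie superalgebra `K` of skew elements of `(A,*)`: a graded
`φ`-submodule of `K` with `[U,K] ⊆ U`. -/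
structure LieIdealOfSkew [GradedAlgebra 𝒜] (σ : Superinvolution 𝒜) where
  carrier : Submodule φ A
  skew : ∀ x ∈ carrier, σ.toFun x = -x
  graded' : ∀ (i : ZMod 2), ∀ x ∈ carrier, ((DirectSum.decompose 𝒜 x) i : A) ∈ carrier
  bracket_mem : ∀ (i j : ZMod 2) (u k : A), u ∈ carrier → u ∈ 𝒜 i →
    k ∈ 𝒜 j → σ.toFun k = -k → sbr i j u k ∈ carrier

/-- The additive span of superbrackets of homogeneous elements of `S` and `T`. -/
def superBrAdd (S T : Set A) : AddSubgroup A :=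
  AddSubgroup.closure
    {z : A | ∃ (i j : ZMod 2) (x y : A), x ∈ S ∧ x ∈ 𝒜 i ∧ y ∈ T ∧ y ∈ 𝒜 j ∧ z = sbr i j x y}

/-- The `φ`-submodule spanned by superbrackets of homogeneous elements of `S` and `T`. -/
def superBrSpan (S T : Set A) : Submodule φ A :=
  Submodule.span φ
    {z : A | ∃ (i j : ZMod 2) (x y : A), x ∈ S ∧ x ∈ 𝒜 i ∧ y ∈ T ∧ y ∈ 𝒜 j ∧ z = sbr i j x y}

end

/-- Data exhibiting the prime superalgebra `A` as a central order in a simple superalgebra `B`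
that is 4-dimensional over its center. -/
structure CentralOrderIn4DimSimple (φ : Type*) [CommRing φ] {A : Type*} [Ring A] [Algebra φ A]
    (𝒜 : ZMod 2 → Submodule φ A) [GradedAlgebra 𝒜] where
  B : Type
  [ringB : Ring B]
  [algB : Algebra φ B]
  ℬ : ZMod 2 → Submodule φ B
  [gradedB : GradedAlgebra ℬ]
  ι : A →ₐ[φ] B
  inj : Function.Injective ι
  grading : ∀ (i : ZMod 2), ∀ x ∈ 𝒜 i, ι x ∈ ℬ i
  central_unit : ∀ z ∈ evenCenter 𝒜, z ≠ 0 → IsUnit (ι z)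
  localized : ∀ b : B, ∃ z a : A, z ∈ evenCenter 𝒜 ∧ z ≠ 0 ∧ ι z * b = ι a
  sq_ne_zero : ∃ x y : B, x * y ≠ 0
  simple : ∀ J : SuperIdeal ℬ, J.carrier = ⊥ ∨ J.carrier = ⊤
  dim4 : Module.finrank (Subring.center B) B = 4


section AuxProofs

variable {φ A : Type*} [CommRing φ] [Ring A] [Algebra φ A]

private lemma ssign_zero_left (j : ZMod 2) : ssign 0 j = 1 := by
  have h : ¬((0 : ZMod 2) = 1 ∧ j = 1) := by rintro ⟨h01, -⟩; exact absurd h01 (by decide)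
  unfold ssign; rw [if_neg h]

private lemma ssign_zero_right (i : ZMod 2) : ssign i 0 = 1 := by
  have h : ¬(i = 1 ∧ (0 : ZMod 2) = 1) := by rintro ⟨-, h01⟩; exact absurd h01 (by decide)
  unfold ssign; rw [if_neg h]

private lemma half_cancel [Invertible (2 : φ)] {c : A} (h : c + c = 0) : c = 0 := by
  have h2 : (2 : φ) • c = 0 := by rw [two_smul]; exact h
  calc c = ⅟(2:φ) • ((2:φ) • c) := by rw [smul_smul, invOf_mul_self, one_smul]
    _ = 0 := by rw [h2, smul_zero]

/-- In a semiprime superalgebra, a homogeneous element `c` with `cAc = 0` is zero. -/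
private lemma semiprime_kill (𝒜 : ZMod 2 → Submodule φ A) [GradedAlgebra 𝒜]
    (hsemi : SuperSemiprime 𝒜) {j : ZMod 2} {c : A} (hc : c ∈ 𝒜 j)
    (h : ∀ y : A, c * y * c = 0) : c = 0 := by
  set S : Set A := {z | ∃ p q : A, z = p * c * q} with hS
  have hgen : ∀ p q : A, p * c * q ∈ Submodule.span φ S :=
    fun p q => Submodule.subset_span ⟨p, q, rfl⟩
  have hdec1 : ∀ {m : ZMod 2} (p : A), p ∈ 𝒜 m → ∀ {l : ZMod 2} (q : A), q ∈ 𝒜 l →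
      ∀ i : ZMod 2, ((decompose 𝒜 (p * c * q)) i : A) ∈ Submodule.span φ S := by
    intro m p hp l q hq i
    have hmem : p * c * q ∈ 𝒜 (m + j + l) :=
      SetLike.mul_mem_graded (SetLike.mul_mem_graded hp hc) hq
    by_cases hi : m + j + l = i
    · rw [← hi, DirectSum.decompose_of_mem_same 𝒜 hmem]; exact hgen p q
    · rw [DirectSum.decompose_of_mem_ne 𝒜 hmem hi]; exact Submodule.zero_mem _
  have hdec2 : ∀ {m : ZMod 2} (p : A), p ∈ 𝒜 m → ∀ (q : A), ∀ i : ZMod 2,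
      ((decompose 𝒜 (p * c * q)) i : A) ∈ Submodule.span φ S := by
    intro m p hp
    refine DirectSum.Decomposition.inductionOn 𝒜
      (motive := fun q => ∀ i : ZMod 2, ((decompose 𝒜 (p * c * q)) i : A) ∈ Submodule.span φ S)
      ?_ ?_ ?_
    · intro i; rw [mul_zero]; simp
    · intro l q i; exact hdec1 p hp (q : A) q.2 i
    · intro q q' hq hq' i
      rw [mul_add, DirectSum.decompose_add, DirectSum.add_apply, Submodule.coe_add]
      exact Submodule.add_mem _ (hq i) (hq' i)
  have hdec3 : ∀ (p q : A) (i : ZMod 2),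
      ((decompose 𝒜 (p * c * q)) i : A) ∈ Submodule.span φ S := by
    intro p
    refine DirectSum.Decomposition.inductionOn 𝒜
      (motive := fun p => ∀ (q : A) (i : ZMod 2),
        ((decompose 𝒜 (p * c * q)) i : A) ∈ Submodule.span φ S) ?_ ?_ ?_ p
    · intro q i; rw [zero_mul, zero_mul]; simp
    · intro m pm; exact hdec2 (pm : A) pm.2
    · intro p₁ p₂ h₁ h₂ q i
      have hsplit : (p₁ + p₂) * c * q = p₁ * c * q + p₂ * c * q := by noncomm_ring
      rw [hsplit, DirectSum.decompose_add, DirectSum.add_apply, Submodule.coe_add]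
      exact Submodule.add_mem _ (h₁ q i) (h₂ q i)
  have hgraded : ∀ (i : ZMod 2), ∀ x ∈ Submodule.span φ S,
      ((decompose 𝒜 x) i : A) ∈ Submodule.span φ S := by
    intro i x hx
    induction hx using Submodule.span_induction with
    | mem z hz => obtain ⟨p, q, rfl⟩ := hz; exact hdec3 p q i
    | zero => simp
    | add y z _ _ hy hz =>
        rw [DirectSum.decompose_add, DirectSum.add_apply, Submodule.coe_add]
        exact Submodule.add_mem _ hy hz
    | smul r y _ hy =>
        rw [DirectSum.decompose_smul, DirectSum.smul_apply, Submodule.coe_smul]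
        exact Submodule.smul_mem _ r hy
  have hmull : ∀ (a x : A), x ∈ Submodule.span φ S → a * x ∈ Submodule.span φ S := by
    intro a x hx
    induction hx using Submodule.span_induction with
    | mem z hz =>
        obtain ⟨p, q, rfl⟩ := hz
        have : a * (p * c * q) = (a * p) * c * q := by noncomm_ring
        rw [this]; exact hgen _ _
    | zero => rw [mul_zero]; exact Submodule.zero_mem _
    | add y z _ _ hy hz => rw [mul_add]; exact Submodule.add_mem _ hy hz
    | smul r y _ hy => rw [mul_smul_comm]; exact Submodule.smul_mem _ r hy
  have hmulr : ∀ (a x : A), x ∈ Submodule.span φ S → x * a ∈ Submodule.span φ S := by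
    intro a x hx
    induction hx using Submodule.span_induction with
    | mem z hz =>
        obtain ⟨p, q, rfl⟩ := hz
        have : (p * c * q) * a = p * c * (q * a) := by noncomm_ring
        rw [this]; exact hgen _ _
    | zero => rw [zero_mul]; exact Submodule.zero_mem _
    | add y z _ _ hy hz => rw [add_mul]; exact Submodule.add_mem _ hy hz
    | smul r y _ hy => rw [smul_mul_assoc]; exact Submodule.smul_mem _ r hy
  have hzero : ∀ x ∈ Submodule.span φ S, ∀ y ∈ Submodule.span φ S, x * y = 0 := by
    intro x hx
    induction hx using Submodule.span_induction with
    | mem z hz =>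
        obtain ⟨p, q, rfl⟩ := hz
        intro y hy
        induction hy using Submodule.span_induction with
        | mem z' hz' =>
            obtain ⟨p', q', rfl⟩ := hz'
            have : (p * c * q) * (p' * c * q') = p * (c * (q * p') * c) * q' := by noncomm_ring
            rw [this, h (q * p'), mul_zero, zero_mul]
        | zero => rw [mul_zero]
        | add y z _ _ hy hz => rw [mul_add, hy, hz, add_zero]
        | smul r y _ hy => rw [mul_smul_comm, hy, smul_zero]
    | zero => intro y hy; rw [zero_mul]
    | add y z _ _ hy hz => intro w hw; rw [add_mul, hy w hw, hz w hw, add_zero]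
    | smul r y _ hy => intro w hw; rw [smul_mul_assoc, hy w hw, smul_zero]
  have hI : (⟨Submodule.span φ S, hmull, hmulr, hgraded⟩ : SuperIdeal 𝒜).carrier = ⊥ :=
    hsemi _ hzero
  have hcmem : c ∈ Submodule.span φ S := by
    have hc1 : c = 1 * c * 1 := by rw [one_mul, mul_one]
    rw [hc1]; exact hgen 1 1
  have hbot : c ∈ (⊥ : Submodule φ A) := hI ▸ hcmem
  simpa using hbot

/-- For `w ∈ U ∩ 𝒜 0`, the element `w²` is central. -/
private lemma sq_comm [Invertible (2 : φ)] (𝒜 : ZMod 2 → Submodule φ A) [GradedAlgebra 𝒜]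
    (hsemi : SuperSemiprime 𝒜) (σ : Superinvolution 𝒜) (U : LieIdealOfSkew 𝒜 σ)
    (hU : ∀ (i j k : ZMod 2) (u v w : A), u ∈ U.carrier → u ∈ 𝒜 i → v ∈ U.carrier → v ∈ 𝒜 j →
      w ∈ U.carrier → w ∈ 𝒜 k → sbr (i + j) k (scirc i j u v) w = 0)
    {w : A} (hwU : w ∈ U.carrier) (hw0 : w ∈ 𝒜 0) :
    ∀ x : A, (w * w) * x = x * (w * w) := by
  have hwskew : σ.toFun w = -w := U.skew w hwU
  have he0 : w * w ∈ 𝒜 (0 : ZMod 2) := by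
    simpa using SetLike.mul_mem_graded hw0 hw0
  -- w² commutes with every homogeneous element of U
  have hcomm : ∀ (n : ZMod 2) (z : A), z ∈ U.carrier → z ∈ 𝒜 n →
      (w * w) * z = z * (w * w) := by
    intro n z hzU hzn
    have h0 := hU 0 0 n w w z hwU hw0 hwU hw0 hzU hzn
    rw [show ((0 : ZMod 2) + 0) = 0 from by decide] at h0
    simp only [sbr, scirc, ssign_zero_left, one_smul] at h0
    have h1 : ((w*w)*z - z*(w*w)) + ((w*w)*z - z*(w*w))
        = (w*w + w*w) * z - z * (w*w + w*w) := by noncomm_ring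
    rw [h0] at h1
    exact sub_eq_zero.mp (half_cancel (φ := φ) h1)
  have hcomm0 : (w * w) * w = w * (w * w) := by rw [mul_assoc]
  have hD𝒜 : ∀ (n : ZMod 2) (x : A), x ∈ 𝒜 n → (w*w) * x - x * (w*w) ∈ 𝒜 n := by
    intro n x hx
    have h1 : (w*w) * x ∈ 𝒜 n := by simpa using SetLike.mul_mem_graded he0 hx
    have h2 : x * (w*w) ∈ 𝒜 n := by simpa using SetLike.mul_mem_graded hx he0
    exact Submodule.sub_mem _ h1 h2
  -- (ad w²)² kills homogeneous skew elements
  have hd2skew : ∀ (n : ZMod 2) (k : A), k ∈ 𝒜 n → σ.toFun k = -k →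
      (w*w) * ((w*w) * k - k * (w*w)) - ((w*w) * k - k * (w*w)) * (w*w) = 0 := by
    intro n k hk hks
    have hw1U : w * k - k * w ∈ U.carrier := by
      have hb := U.bracket_mem 0 n w k hwU hw0 hk hks
      simpa [sbr, ssign_zero_left] using hb
    have hw1n : w * k - k * w ∈ 𝒜 n := by
      have h1 : w * k ∈ 𝒜 n := by simpa using SetLike.mul_mem_graded hw0 hk
      have h2 : k * w ∈ 𝒜 n := by simpa using SetLike.mul_mem_graded hk hw0
      exact Submodule.sub_mem _ h1 h2
    have hc1 : (w*w) * (w * k - k * w) = (w * k - k * w) * (w*w) := hcomm n _ hw1U hw1n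
    have key : (w*w) * ((w*w) * k - k * (w*w)) - ((w*w) * k - k * (w*w)) * (w*w)
        = ((w*w) * (w * (w*k - k*w)) - (w * (w*k - k*w)) * (w*w))
          + ((w*w) * ((w*k - k*w) * w) - ((w*k - k*w) * w) * (w*w)) := by noncomm_ring
    have h1 : (w*w) * (w * (w*k - k*w)) = (w * (w*k - k*w)) * (w*w) := by
      calc (w*w) * (w * (w*k - k*w)) = w * ((w*w) * (w*k - k*w)) := by noncomm_ring
        _ = w * ((w*k - k*w) * (w*w)) := by rw [hc1]
        _ = (w * (w*k - k*w)) * (w*w) := by noncomm_ring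
    have h2 : (w*w) * ((w*k - k*w) * w) = ((w*k - k*w) * w) * (w*w) := by
      calc (w*w) * ((w*k - k*w) * w) = ((w*w) * (w*k - k*w)) * w := by noncomm_ring
        _ = ((w*k - k*w) * (w*w)) * w := by rw [hc1]
        _ = ((w*k - k*w) * w) * (w*w) := by noncomm_ring
    rw [key, h1, h2, sub_self, sub_self, add_zero]
  -- (ad w²)² kills homogeneous symmetric elements
  have hd2sym : ∀ (n : ZMod 2) (y : A), y ∈ 𝒜 n → σ.toFun y = y →
      (w*w) * ((w*w) * y - y * (w*w)) - ((w*w) * y - y * (w*w)) * (w*w) = 0 := by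
    intro n y hy hys
    have hκn : w * y + y * w ∈ 𝒜 n := by
      have h1 : w * y ∈ 𝒜 n := by simpa using SetLike.mul_mem_graded hw0 hy
      have h2 : y * w ∈ 𝒜 n := by simpa using SetLike.mul_mem_graded hy hw0
      exact Submodule.add_mem _ h1 h2
    have hκskew : σ.toFun (w * y + y * w) = -(w * y + y * w) := by
      have h1 : σ.toFun (w * y) = -(y * w) := by
        rw [σ.mul_rev 0 n w hw0 y hy, hwskew, hys, ssign_zero_left, one_smul, mul_neg]
      have h2 : σ.toFun (y * w) = -(w * y) := by
        rw [σ.mul_rev n 0 y hy w hw0, hwskew, hys, ssign_zero_right, one_smul, neg_mul]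
      rw [map_add, h1, h2]; abel
    have hPU : w * (w*y + y*w) - (w*y + y*w) * w ∈ U.carrier := by
      have hb := U.bracket_mem 0 n w (w*y + y*w) hwU hw0 hκn hκskew
      simpa [sbr, ssign_zero_left] using hb
    have hPeq : w * (w*y + y*w) - (w*y + y*w) * w = (w*w) * y - y * (w*w) := by noncomm_ring
    have hPU' : (w*w) * y - y * (w*w) ∈ U.carrier := hPeq ▸ hPU
    have hPn : (w*w) * y - y * (w*w) ∈ 𝒜 n := hD𝒜 n y hy
    exact sub_eq_zero.mpr (hcomm n _ hPU' hPn)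
  -- (ad w²)² kills homogeneous elements
  have hd2hom : ∀ (n : ZMod 2) (x : A), x ∈ 𝒜 n →
      (w*w) * ((w*w) * x - x * (w*w)) - ((w*w) * x - x * (w*w)) * (w*w) = 0 := by
    intro n x hx
    have hsx : σ.toFun x ∈ 𝒜 n := σ.grading n x hx
    have h1 := hd2sym n (x + σ.toFun x) (Submodule.add_mem _ hx hsx)
      (by rw [map_add, σ.invol]; abel)
    have h2 := hd2skew n (x - σ.toFun x) (Submodule.sub_mem _ hx hsx)
      (by rw [map_sub, σ.invol]; abel)
    have h3 : ((w*w) * ((w*w) * x - x * (w*w)) - ((w*w) * x - x * (w*w)) * (w*w))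
          + ((w*w) * ((w*w) * x - x * (w*w)) - ((w*w) * x - x * (w*w)) * (w*w))
        = ((w*w) * ((w*w) * (x + σ.toFun x) - (x + σ.toFun x) * (w*w))
            - ((w*w) * (x + σ.toFun x) - (x + σ.toFun x) * (w*w)) * (w*w))
          + ((w*w) * ((w*w) * (x - σ.toFun x) - (x - σ.toFun x) * (w*w))
            - ((w*w) * (x - σ.toFun x) - (x - σ.toFun x) * (w*w)) * (w*w)) := by noncomm_ring
    rw [h1, h2, add_zero] at h3
    exact half_cancel (φ := φ) h3
  -- (ad w²)² = 0 on A
  have hd2 : ∀ x : A,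
      (w*w) * ((w*w) * x - x * (w*w)) - ((w*w) * x - x * (w*w)) * (w*w) = 0 := by
    intro x
    refine DirectSum.Decomposition.inductionOn 𝒜
      (motive := fun x => (w*w) * ((w*w) * x - x * (w*w)) - ((w*w) * x - x * (w*w)) * (w*w) = 0)
      ?_ ?_ ?_ x
    · noncomm_ring
    · intro n m; exact hd2hom n (m : A) m.2
    · intro a b ha hb
      have hsplit : (w*w) * ((w*w) * (a+b) - (a+b) * (w*w)) - ((w*w) * (a+b) - (a+b) * (w*w)) * (w*w)
          = ((w*w) * ((w*w) * a - a * (w*w)) - ((w*w) * a - a * (w*w)) * (w*w))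
            + ((w*w) * ((w*w) * b - b * (w*w)) - ((w*w) * b - b * (w*w)) * (w*w)) := by noncomm_ring
      rw [hsplit, ha, hb, add_zero]
  -- products of ad-images vanish
  have hDxy : ∀ x y : A, ((w*w)*x - x*(w*w)) * ((w*w)*y - y*(w*w)) = 0 := by
    intro x y
    have h0 := hd2 (x * y)
    have hx := hd2 x
    have hy := hd2 y
    have key : (w*w) * ((w*w) * (x*y) - (x*y) * (w*w)) - ((w*w) * (x*y) - (x*y) * (w*w)) * (w*w)
        = ((w*w) * ((w*w) * x - x * (w*w)) - ((w*w) * x - x * (w*w)) * (w*w)) * y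
          + (((w*w)*x - x*(w*w)) * ((w*w)*y - y*(w*w))
              + ((w*w)*x - x*(w*w)) * ((w*w)*y - y*(w*w)))
          + x * ((w*w) * ((w*w) * y - y * (w*w)) - ((w*w) * y - y * (w*w)) * (w*w)) := by
      noncomm_ring
    rw [h0, hx, hy] at key
    have h4 : ((w*w)*x - x*(w*w)) * ((w*w)*y - y*(w*w))
        + ((w*w)*x - x*(w*w)) * ((w*w)*y - y*(w*w)) = 0 := by
      have := key.symm
      simpa using this
    exact half_cancel (φ := φ) h4
  have hDyD : ∀ x y : A, ((w*w)*x - x*(w*w)) * y * ((w*w)*x - x*(w*w)) = 0 := by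
    intro x y
    have h1 := hDxy x (y * x)
    have h2 := hDxy x y
    have key : ((w*w)*x - x*(w*w)) * y * ((w*w)*x - x*(w*w))
        = ((w*w)*x - x*(w*w)) * ((w*w)*(y*x) - (y*x)*(w*w))
          - (((w*w)*x - x*(w*w)) * ((w*w)*y - y*(w*w))) * x := by noncomm_ring
    rw [key, h1, h2, zero_mul, sub_zero]
  have hDzero : ∀ (n : ZMod 2) (x : A), x ∈ 𝒜 n → (w*w)*x - x*(w*w) = 0 := by
    intro n x hx
    exact semiprime_kill 𝒜 hsemi (hD𝒜 n x hx) (fun y => hDyD x y)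
  intro x
  have hfin : (w*w)*x - x*(w*w) = 0 := by
    refine DirectSum.Decomposition.inductionOn 𝒜
      (motive := fun x => (w*w)*x - x*(w*w) = 0) ?_ ?_ ?_ x
    · noncomm_ring
    · intro n m; exact hDzero n (m : A) m.2
    · intro a b ha hb
      have hsplit : (w*w)*(a+b) - (a+b)*(w*w)
          = ((w*w)*a - a*(w*w)) + ((w*w)*b - b*(w*w)) := by noncomm_ring
      rw [hsplit, ha, hb, add_zero]
  exact sub_eq_zero.mp hfin

end AuxProofs

/-- **(Lemma 2.2 (i).)** Let `A` be a nontrivial semiprime superalgebra with superinvolution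
over a commutative ring `φ` with `½ ∈ φ`, and let `U` be a Lie ideal of `K` with
`[U∘U, U] = 0`. Then `u∘v ∈ Z` for every `u, v ∈ U₀`. -/
theorem circ_even_central_of_circ_bracket_zero
    {φ A : Type*} [CommRing φ] [Invertible (2 : φ)] [Ring A] [Algebra φ A]
    (𝒜 : ZMod 2 → Submodule φ A) [GradedAlgebra 𝒜]
    (hsemi : SuperSemiprime 𝒜) (hnontriv : 𝒜 1 ≠ ⊥)
    (σ : Superinvolution 𝒜) (U : LieIdealOfSkew 𝒜 σ)
    (hU : ∀ (i j k : ZMod 2) (u v w : A), u ∈ U.carrier → u ∈ 𝒜 i → v ∈ U.carrier → v ∈ 𝒜 j →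
      w ∈ U.carrier → w ∈ 𝒜 k → sbr (i + j) k (scirc i j u v) w = 0) :
    ∀ u v : A, u ∈ U.carrier → u ∈ 𝒜 0 → v ∈ U.carrier → v ∈ 𝒜 0 →
      scirc 0 0 u v ∈ evenCenter 𝒜 := by
  intro u v huU hu0 hvU hv0
  have hu := sq_comm 𝒜 hsemi σ U hU huU hu0
  have hv := sq_comm 𝒜 hsemi σ U hU hvU hv0
  have hsum := sq_comm 𝒜 hsemi σ U hU (Submodule.add_mem _ huU hvU) (Submodule.add_mem _ hu0 hv0)
  refine ⟨?_, ?_⟩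
  · have h1 : u * v ∈ 𝒜 (0 : ZMod 2) := by simpa using SetLike.mul_mem_graded hu0 hv0
    have h2 : v * u ∈ 𝒜 (0 : ZMod 2) := by simpa using SetLike.mul_mem_graded hv0 hu0
    simpa [scirc, ssign_zero_left, one_smul] using Submodule.add_mem _ h1 h2
  · intro x
    have key : (u*v + v*u) * x = x * (u*v + v*u) := by
      have h1 : (u*u)*x + ((u*v + v*u)*x + (v*v)*x)
          = x*(u*u) + (x*(u*v + v*u) + x*(v*v)) := by
        calc (u*u)*x + ((u*v + v*u)*x + (v*v)*x) = ((u+v)*(u+v))*x := by noncomm_ring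
          _ = x*((u+v)*(u+v)) := hsum x
          _ = x*(u*u) + (x*(u*v + v*u) + x*(v*v)) := by noncomm_ring
      rw [hu x, hv x] at h1
      have h2 := add_left_cancel h1
      exact add_right_cancel h2
    simpa [scirc, ssign_zero_left, one_smul] using key
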